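/- For |q| < 1 and any injective ψ : ℕ → ℕ with positive values, ∏_{n≥1} (1 - q^{ψ(n)}) = ∏_{i≥0} ∏_{n≥1} 1/(1 + q^{2^i ψ(n)}). -/

import Mathlib

open Complex Finset Filter Topology

/-- `1 + w ≠ 0` when `‖w‖ < 1`. -/
lemma aux_ne_zero {w : ℂ} (hw : ‖w‖ < 1) : (1 : ℂ) + w ≠ 0 := by
  intro h
  have : w = -1 := by linear_combination h
  rw [this] at hw
  simp at hw

lemma aux_arg {w : ℂ} (hw : ‖w‖ < 1) : ((1 : ℂ) + w).arg ≠ Real.pi := by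
  apply Complex.slitPlane_arg_ne_pi
  rw [Complex.mem_slitPlane_iff]
  left
  have : |w.re| ≤ ‖w‖ := Complex.abs_re_le_norm w
  simp only [Complex.add_re, Complex.one_re]
  have := abs_le.mp this
  linarith

/-- Multipliability of `∏ (1 + f i)⁻¹` from summability of `f`. -/
lemma aux_multipliable {ι : Type*} {f : ι → ℂ} (hs : Summable f) (hn : ∀ i, ‖f i‖ < 1) :
    Multipliable fun i => ((1 : ℂ) + f i)⁻¹ := by
  apply Complex.multipliable_of_summable_log
  have h1 : Summable fun i => Complex.log (1 + f i) := by
    have := hs.neg.clog_one_sub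
    simpa using this
  have h2 := h1.neg
  apply h2.congr
  intro i
  rw [← Complex.log_inv _ (aux_arg (hn i))]

/-- The key telescoping identity as a `HasProd`. -/
lemma aux_hasProd {x : ℂ} (hx : ‖x‖ < 1) :
    HasProd (fun i : ℕ => ((1 : ℂ) + x ^ 2 ^ i)⁻¹) (1 - x) := by
  have hxn : ∀ i : ℕ, ‖x ^ 2 ^ i‖ < 1 := by
    intro i
    rw [norm_pow]
    exact pow_lt_one₀ (norm_nonneg x) hx (by positivity)
  have hsum : Summable fun i : ℕ => x ^ 2 ^ i := by
    apply Summable.of_norm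
    apply Summable.of_nonneg_of_le (fun i => norm_nonneg _) (fun i => ?_)
      (summable_geometric_of_lt_one (norm_nonneg x) hx)
    rw [norm_pow]
    exact pow_le_pow_of_le_one (norm_nonneg x) hx.le (Nat.lt_two_pow_self (n := i)).le
  have hm : Multipliable fun i : ℕ => ((1 : ℂ) + x ^ 2 ^ i)⁻¹ := aux_multipliable hsum hxn
  -- partial products
  have hne1 : (1 : ℂ) - x ≠ 0 := by
    intro h
    have : x = 1 := by linear_combination -h
    rw [this] at hx; simp at hx
  have hneN : ∀ N : ℕ, (1 : ℂ) - x ^ 2 ^ N ≠ 0 := by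
    intro N h
    have h1 : x ^ 2 ^ N = 1 := by linear_combination -h
    have h2 := hxn N
    rw [h1] at h2; simp at h2
  have hpar : ∀ N : ℕ, (∏ i ∈ Finset.range N, ((1 : ℂ) + x ^ 2 ^ i)) * (1 - x)
      = 1 - x ^ 2 ^ N := by
    intro N
    induction N with
    | zero => simp
    | succ N ih =>
      rw [Finset.prod_range_succ]
      have h2 : x ^ 2 ^ (N + 1) = (x ^ 2 ^ N) * (x ^ 2 ^ N) := by
        rw [← pow_add, pow_succ, mul_two]
      rw [h2]
      linear_combination (1 + x ^ 2 ^ N) * ih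
  have hpar' : ∀ N : ℕ, (∏ i ∈ Finset.range N, ((1 : ℂ) + x ^ 2 ^ i)⁻¹)
      = (1 - x) * (1 - x ^ 2 ^ N)⁻¹ := by
    intro N
    have hP : (∏ i ∈ Finset.range N, ((1 : ℂ) + x ^ 2 ^ i)) ≠ 0 :=
      Finset.prod_ne_zero_iff.mpr fun i _ => aux_ne_zero (hxn i)
    rw [Finset.prod_inv_distrib]
    have hp' : (∏ i ∈ Finset.range N, ((1 : ℂ) + x ^ 2 ^ i))
        = (1 - x ^ 2 ^ N) / (1 - x) := by rw [eq_div_iff hne1]; exact hpar N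
    rw [hp', inv_div, div_eq_mul_inv]
  -- limit of partial products
  have htend0 : Tendsto (fun N : ℕ => x ^ 2 ^ N) atTop (𝓝 0) := by
    refine squeeze_zero_norm (fun N => ?_)
      (tendsto_pow_atTop_nhds_zero_of_lt_one (norm_nonneg x) hx)
    rw [norm_pow]
    exact pow_le_pow_of_le_one (norm_nonneg x) hx.le (Nat.lt_two_pow_self (n := N)).le
  have htend : Tendsto (fun N : ℕ => ∏ i ∈ Finset.range N, ((1 : ℂ) + x ^ 2 ^ i)⁻¹)
      atTop (𝓝 (1 - x)) := by
    have h1 : Tendsto (fun N : ℕ => (1 - x) * (1 - x ^ 2 ^ N)⁻¹) atTop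
        (𝓝 ((1 - x) * (1 - (0 : ℂ))⁻¹)) := by
      apply Tendsto.const_mul
      exact (Tendsto.sub tendsto_const_nhds htend0).inv₀ (by simp)
    simp only [sub_zero, inv_one, mul_one] at h1
    exact h1.congr fun N => (hpar' N).symm
  have h2 := hm.hasProd.tendsto_prod_nat
  have := tendsto_nhds_unique h2 htend
  rw [← this]
  exact hm.hasProd

set_option maxHeartbeats 1000000 in
theorem stmt_9 (q : ℂ) (hq : ‖q‖ < 1) (ψ : ℕ → ℕ)
    (hinj : Function.Injective ψ) (hpos : ∀ n, 1 ≤ ψ n) :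
    ∏' n : ℕ, ((1 : ℂ) - q ^ ψ n) =
      ∏' i : ℕ, ∏' n : ℕ, ((1 : ℂ) + q ^ (2 ^ i * ψ n))⁻¹ := by
  set F : ℕ → ℕ → ℂ := fun n i => ((1 : ℂ) + q ^ (2 ^ i * ψ n))⁻¹ with hF
  have hqle : ∀ m : ℕ, 1 ≤ m → ‖q ^ m‖ < 1 := by
    intro m hm
    rw [norm_pow]
    calc ‖q‖ ^ m ≤ ‖q‖ ^ 1 := pow_le_pow_of_le_one (norm_nonneg q) hq.le hm
    _ < 1 := by rwa [pow_one]
  have hprod : ∀ n, HasProd (fun i => F n i) (1 - q ^ ψ n) := by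
    intro n
    have h := aux_hasProd (x := q ^ ψ n) (hqle _ (hpos n))
    have e : ∀ i : ℕ, (q ^ ψ n) ^ 2 ^ i = q ^ (2 ^ i * ψ n) := fun i => by
      rw [← pow_mul, mul_comm]
    simpa only [e, hF] using h
  -- multipliability on the product space
  have g2 : Summable (fun i : ℕ => ‖q‖ ^ i) :=
    summable_geometric_of_lt_one (norm_nonneg q) hq
  have g1 : Summable (fun n : ℕ => ‖q‖ ^ ψ n) := g2.comp_injective hinj
  have hmaj : Summable fun p : ℕ × ℕ => ‖q‖ ^ ψ p.1 * ‖q‖ ^ p.2 :=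
    g1.mul_of_nonneg g2 (fun n => by positivity) (fun i => by positivity)
  have hsum : Summable fun p : ℕ × ℕ => q ^ (2 ^ p.2 * ψ p.1) := by
    apply Summable.of_norm
    apply Summable.of_nonneg_of_le (fun p => norm_nonneg _) (fun p => ?_) hmaj
    rw [norm_pow, ← pow_add]
    apply pow_le_pow_of_le_one (norm_nonneg q) hq.le
    calc ψ p.1 + p.2 ≤ ψ p.1 + ψ p.1 * p.2 := by
          have := hpos p.1
          nlinarith
    _ = ψ p.1 * (1 + p.2) := by ring
    _ ≤ ψ p.1 * 2 ^ p.2 := by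
          apply Nat.mul_le_mul_left
          have := Nat.lt_two_pow_self (n := p.2)
          omega
    _ = 2 ^ p.2 * ψ p.1 := Nat.mul_comm _ _
  have h : Multipliable (Function.uncurry F) := by
    have := aux_multipliable hsum (fun p => hqle _ (by
      have h1 := hpos p.1
      have h2 : 1 ≤ 2 ^ p.2 := Nat.one_le_two_pow
      exact Nat.one_le_iff_ne_zero.mpr (Nat.mul_ne_zero (by omega) (by omega))))
    exact this
  have h₁ : ∀ n, Multipliable (F n) := fun n => (hprod n).multipliable
  have h₂ : ∀ i, Multipliable fun n => F n i := by
    intro i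
    apply aux_multipliable (f := fun n => q ^ (2 ^ i * ψ n)) ?_ (fun n => hqle _ (by
      have h1 := hpos n
      exact Nat.one_le_iff_ne_zero.mpr (Nat.mul_ne_zero (by positivity) (by omega))))
    apply Summable.of_norm
    apply Summable.of_nonneg_of_le (fun n => norm_nonneg _) (fun n => ?_) g1
    rw [norm_pow]
    exact pow_le_pow_of_le_one (norm_nonneg q) hq.le
      (Nat.le_mul_of_pos_left _ (by positivity))
  rw [Multipliable.tprod_comm' h h₁ h₂]
  exact tprod_congr fun n => ((hprod n).tprod_eq).symm
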